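/- Let ν : ℝ → ℝ be continuous and k₀ ∈ ℝ, and suppose that (v−u)·ν(u+v−k₀) − (k₀−u)·ν(u) + (k₀−v)·ν(v) = 0 for all u, v ∈ ℝ. Then ν is affine: there exist ν₀, ν₁ ∈ ℝ such that ν(k) = ν₁ k + ν₀ for all k ∈ ℝ. -/
import Mathlib


/-- If `ν : ℝ → ℝ` is continuous and satisfies
`(v−u)ν(u+v−k₀) − (k₀−u)ν(u) + (k₀−v)ν(v) = 0` for all `u, v ∈ ℝ` (for a fixed `k₀`),
then `ν` is affine. -/
theorem affine_of_functional_equation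
    (ν : ℝ → ℝ) (hν : Continuous ν) (k₀ : ℝ)
    (h : ∀ u v : ℝ,
      (v - u) * ν (u + v - k₀) - (k₀ - u) * ν u + (k₀ - v) * ν v = 0) :
    ∃ ν₀ ν₁ : ℝ, ∀ k : ℝ, ν k = ν₁ * k + ν₀ := by
  set g : ℝ → ℝ := fun a => ν (k₀ + a) - ν k₀ with hg
  have key : ∀ a b : ℝ, (b - a) * g (a + b) = b * g b - a * g a := by
    intro a b
    have H := h (k₀ + a) (k₀ + b)
    have e : k₀ + a + (k₀ + b) - k₀ = k₀ + (a + b) := by ring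
    rw [e] at H
    simp only [hg]
    linear_combination H
  have g0 : g 0 = 0 := by simp [hg]
  have godd : ∀ a : ℝ, g (-a) = -g a := by
    intro a
    rcases eq_or_ne a 0 with rfl | ha
    · simp [g0]
    · have H := key a (-a)
      rw [add_neg_cancel, g0] at H
      have : a * (g (-a) + g a) = 0 := by linarith
      have := mul_eq_zero.mp this
      rcases this with h1 | h2
      · exact absurd h1 ha
      · linarith
  have prop : ∀ s d : ℝ, d * g s = s * g d := by
    intro s d
    have H1 := key ((s + d) / 2) ((s - d) / 2)
    have H2 := key ((s + d) / 2) (-((s - d) / 2))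
    rw [godd ((s - d) / 2)] at H2
    have e1 : (s + d) / 2 + (s - d) / 2 = s := by ring
    have e2 : (s + d) / 2 + -((s - d) / 2) = d := by ring
    rw [e1] at H1
    rw [e2] at H2
    linear_combination H2 - H1
  refine ⟨ν k₀ - k₀ * g 1, g 1, fun k => ?_⟩
  have := prop 1 (k - k₀)
  have hk : ν k = g (k - k₀) + ν k₀ := by
    simp only [hg]
    rw [show k₀ + (k - k₀) = k by ring]
    ring
  rw [hk]
  rw [one_mul] at this
  linarith [this]
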